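/- For all integers n and k with k even and 1 < k ≤ n, every deterministic OBDD computing the Boolean function NotO^k_n has width at least k/2 + 1. -/

import Mathlib

/-- Number of 1s in a binary string ν ∈ {0,1}^n. -/
def countOnes {n : ℕ} (ν : Fin n → Bool) : ℕ :=
  (Finset.univ.filter (fun i => ν i = true)).card

/-- Number of 0s in a binary string ν ∈ {0,1}^n. -/
def countZeros {n : ℕ} (ν : Fin n → Bool) : ℕ :=
  (Finset.univ.filter (fun i => ν i = false)).card

/-- Number of 1s among the first `k` bits. -/
def countOnesFirst (k : ℕ) {n : ℕ} (ν : Fin n → Bool) : ℕ :=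
  (Finset.univ.filter (fun i : Fin n => (i : ℕ) < k ∧ ν i = true)).card

/-- Number of 0s among the first `k` bits. -/
def countZerosFirst (k : ℕ) {n : ℕ} (ν : Fin n → Bool) : ℕ :=
  (Finset.univ.filter (fun i : Fin n => (i : ℕ) < k ∧ ν i = false)).card

/-- A deterministic OBDD of width `d` on `n` Boolean variables. -/
structure DOBDD (n d : ℕ) where
  ord : Equiv.Perm (Fin n)
  T : Fin n → Bool → Fin d → Fin d
  start : Fin d
  Accept : Finset (Fin d)

/-- The node reached by a deterministic OBDD after reading all input bits. -/
def DOBDD.run {n d : ℕ} (M : DOBDD n d) (ν : Fin n → Bool) : Fin d :=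
  (List.finRange n).foldl (fun v j => M.T j (ν (M.ord j)) v) M.start

def DOBDD.accepts {n d : ℕ} (M : DOBDD n d) (ν : Fin n → Bool) : Prop :=
  M.run ν ∈ M.Accept

/-- A deterministic OBDD computes a total Boolean function. -/
def DOBDD.computes {n d : ℕ} (M : DOBDD n d) (f : (Fin n → Bool) → Bool) : Prop :=
  ∀ ν, M.accepts ν ↔ f ν = true

/-- A nondeterministic OBDD of width `d` on `n` Boolean variables. -/
structure NOBDD (n d : ℕ) where
  ord : Equiv.Perm (Fin n)
  T : Fin n → Bool → Fin d → Set (Fin d)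
  start : Fin d
  Accept : Finset (Fin d)

/-- The set of nodes reachable by a nondeterministic OBDD after reading all input bits. -/
def NOBDD.reach {n d : ℕ} (M : NOBDD n d) (ν : Fin n → Bool) : Set (Fin d) :=
  (List.finRange n).foldl (fun S j => {w | ∃ v ∈ S, w ∈ M.T j (ν (M.ord j)) v}) {M.start}

def NOBDD.accepts {n d : ℕ} (M : NOBDD n d) (ν : Fin n → Bool) : Prop :=
  ∃ v ∈ M.reach ν, v ∈ M.Accept

/-- A nondeterministic OBDD computes a total Boolean function. -/
def NOBDD.computes {n d : ℕ} (M : NOBDD n d) (f : (Fin n → Bool) → Bool) : Prop :=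
  ∀ ν, M.accepts ν ↔ f ν = true

/-- The class of Boolean functions on n variables computed by deterministic
OBDDs of width at most `w`. -/
def OBDDclass (n w : ℕ) : Set ((Fin n → Bool) → Bool) :=
  {f | ∃ d, d ≤ w ∧ ∃ M : DOBDD n d, M.computes f}

/-- The class of Boolean functions on n variables computed by nondeterministic
OBDDs of width at most `w`. -/
def NOBDDclass (n w : ℕ) : Set ((Fin n → Bool) → Bool) :=
  {f | ∃ d, d ≤ w ∧ ∃ M : NOBDD n d, M.computes f}

/-- Final probability distribution of a stable probabilistic OBDD given by the pair of
left-stochastic matrices `A`, variable order `ord`, and initial node `s`. -/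
noncomputable def stableProbRun {n d : ℕ} (A : Bool → Matrix (Fin d) (Fin d) ℝ)
    (ord : Equiv.Perm (Fin n)) (s : Fin d) (ν : Fin n → Bool) : Fin d → ℝ :=
  (List.finRange n).foldl (fun v j => (A (ν (ord j))).mulVec v)
    (fun i => if i = s then 1 else 0)

/-- Final quantum state of a stable ID quantum OBDD given by the pair of matrices `U`
and the initial computational-basis state `q0`, reading bits in the natural order. -/
noncomputable def quantumRunStable {n d : ℕ} (U : Bool → Matrix (Fin d) (Fin d) ℂ) (q0 : Fin d)
    (ν : Fin n → Bool) : Fin d → ℂ :=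
  (List.finRange n).foldl (fun ψ j => (U (ν j)).mulVec ψ)
    (fun i => if i = q0 then 1 else 0)

/-- A quantum OBDD of width `d` on `n` Boolean variables. -/
structure QOBDD (n d : ℕ) where
  ord : Equiv.Perm (Fin n)
  U : Fin n → Bool → Matrix (Fin d) (Fin d) ℂ
  unitary : ∀ j b, U j b ∈ Matrix.unitaryGroup (Fin d) ℂ
  q0 : Fin d
  Accept : Finset (Fin d)

/-- The final state of a quantum OBDD on input ν. -/
noncomputable def QOBDD.finalState {n d : ℕ} (M : QOBDD n d) (ν : Fin n → Bool) : Fin d → ℂ :=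
  (List.finRange n).foldl (fun ψ j => (M.U j (ν (M.ord j))).mulVec ψ)
    (fun i => if i = M.q0 then 1 else 0)

/-- The acceptance probability of a quantum OBDD on input ν. -/
noncomputable def QOBDD.acceptProb {n d : ℕ} (M : QOBDD n d) (ν : Fin n → Bool) : ℝ :=
  ∑ i ∈ M.Accept, Complex.normSq (M.finalState ν i)

/-- `NotO_n(ν) = 0` iff `#0(ν) = #1(ν)`. -/
def NotO (n : ℕ) (ν : Fin n → Bool) : Bool := !decide (countZeros ν = countOnes ν)

/-- `NotSQUARE_n(ν) = 0` iff `(#0(ν))² = #1(ν)`. -/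
def NotSQUARE (n : ℕ) (ν : Fin n → Bool) : Bool := !decide ((countZeros ν) ^ 2 = countOnes ν)

/-- `NotPOWER_n(ν) = 0` iff `2^{#0(ν)} = #1(ν)`. -/
def NotPOWER (n : ℕ) (ν : Fin n → Bool) : Bool := !decide (2 ^ (countZeros ν) = countOnes ν)

/-- `MOD^k_n(ν) = 1` iff `#1(ν) ≡ 0 (mod k)`. -/
def MODf (n k : ℕ) (ν : Fin n → Bool) : Bool := decide (countOnes ν % k = 0)

/-- `NotO^k_n(ν) = 0` iff `#^k_0(ν) = #^k_1(ν) = k/2`. -/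
def NotOk (n k : ℕ) (ν : Fin n → Bool) : Bool :=
  !decide (countZerosFirst k ν = k / 2 ∧ countOnesFirst k ν = k / 2)

/-- The ordered subsequence of value bits `ν_{2i}` (1-indexed, `1 ≤ i ≤ k/2`) whose
marker bit `ν_{2i-1}` equals `b`; `b = false` gives `α(ν)` and `b = true` gives `β(ν)`. -/
def valueSubseq {n : ℕ} (k : ℕ) (b : Bool) (ν : Fin n → Bool) : List Bool :=
  (List.range (k / 2)).filterMap (fun j =>
    if h : 2 * j + 1 < n then
      if ν ⟨2 * j, by omega⟩ = b then some (ν ⟨2 * j + 1, h⟩) else none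
    else none)

/-- `EQS^k_n(ν) = 1` iff `α(ν) = β(ν)`. -/
def EQS (n k : ℕ) (ν : Fin n → Bool) : Bool :=
  decide (valueSubseq k false ν = valueSubseq k true ν)

/-- `NotEQS^k_n(ν) = 1 - EQS^k_n(ν)`. -/
def NotEQS (n k : ℕ) (ν : Fin n → Bool) : Bool := !(EQS n k ν)

/-- For all `n, k` with `k` even and `1 < k ≤ n`, any deterministic OBDD computing
`NotO^k_n` has width at least `k/2 + 1`. -/
private lemma card_filter_lt_fin (N m : ℕ) (h : m ≤ N) :
    (Finset.univ.filter fun y : Fin N => (y : ℕ) < m).card = m := by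
  have he : (Finset.univ.filter fun y : Fin N => (y : ℕ) < m)
      = (Finset.range m).attachFin (fun x hx => lt_of_lt_of_le (Finset.mem_range.mp hx) h) := by
    ext y
    simp [Finset.mem_attachFin]
  rw [he, Finset.card_attachFin, Finset.card_range]

private lemma counts_sum {n : ℕ} (k : ℕ) (hk : k ≤ n) (ν : Fin n → Bool) :
    countZerosFirst k ν + countOnesFirst k ν = k := by
  unfold countZerosFirst countOnesFirst
  rw [← Finset.card_union_of_disjoint]
  · have hU : (Finset.univ.filter fun i : Fin n => (i:ℕ) < k ∧ ν i = false)
        ∪ (Finset.univ.filter fun i : Fin n => (i:ℕ) < k ∧ ν i = true)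
        = Finset.univ.filter (fun i : Fin n => (i:ℕ) < k) := by
      ext i; cases h : ν i <;> simp [h]
    rw [hU, card_filter_lt_fin n k hk]
  · rw [Finset.disjoint_left]
    intro a ha hb
    simp only [Finset.mem_filter] at ha hb
    rw [ha.2.2] at hb
    exact absurd hb.2.2 (by simp)

private lemma exists_eq_of_step (f : ℕ → ℕ) (h0 : f 0 = 0)
    (hstep : ∀ t, f (t+1) ≤ f t + 1) : ∀ t m, m ≤ f t → ∃ s, f s = m := by
  intro t
  induction t with
  | zero => intro m hm; exact ⟨0, by omega⟩
  | succ t ih =>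
    intro m hm
    by_cases h : m ≤ f t
    · exact ih m h
    · exact ⟨t+1, by have := hstep t; omega⟩

private lemma foldl_congr_on {n d : ℕ} (M : DOBDD n d) (ν ν' : Fin n → Bool) :
    ∀ (l : List (Fin n)) (v : Fin d), (∀ j ∈ l, ν (M.ord j) = ν' (M.ord j)) →
      l.foldl (fun v j => M.T j (ν (M.ord j)) v) v
        = l.foldl (fun v j => M.T j (ν' (M.ord j)) v) v := by
  intro l
  induction l with
  | nil => simp
  | cons a l ih =>
    intro v h
    simp only [List.foldl_cons]
    rw [h a (by simp)]
    exact ih _ (fun j hj => h j (by simp [hj]))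

private lemma indicator_countOnesFirst {n : ℕ} (k : ℕ) (T : Finset (Fin n))
    (hT : ∀ i ∈ T, (i : ℕ) < k) :
    countOnesFirst k (fun i => decide (i ∈ T)) = T.card := by
  unfold countOnesFirst
  congr 1
  ext i
  simp only [Finset.mem_filter, Finset.mem_univ, true_and, decide_eq_true_eq]
  exact ⟨fun h => h.2, fun h => ⟨hT i h, h⟩⟩

theorem notOk_deterministic_lower_bound (n k : ℕ) (hk : Even k) (h1 : 1 < k) (h2 : k ≤ n) :
    ∀ (d : ℕ) (M : DOBDD n d), M.computes (NotOk n k) → k / 2 + 1 ≤ d := by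
  intro d M hcomp
  by_contra hd
  push_neg at hd
  set K := k / 2 with hKdef
  have hKK : K + K = k := by
    obtain ⟨r, hr⟩ := hk; omega
  have hdK : d ≤ K := by omega
  -- counting function
  set c : ℕ → ℕ := fun t =>
    (Finset.univ.filter fun j : Fin n => (j:ℕ) < t ∧ ((M.ord j):ℕ) < k).card with hc
  have hc0 : c 0 = 0 := by simp [hc]
  have hcstep : ∀ t, c (t+1) ≤ c t + 1 := by
    intro t
    show (Finset.univ.filter fun j : Fin n => (j:ℕ) < t+1 ∧ ((M.ord j):ℕ) < k).card
      ≤ (Finset.univ.filter fun j : Fin n => (j:ℕ) < t ∧ ((M.ord j):ℕ) < k).card + 1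
    have hsub : (Finset.univ.filter fun j : Fin n => (j:ℕ) < t+1 ∧ ((M.ord j):ℕ) < k)
        ⊆ (Finset.univ.filter fun j : Fin n => (j:ℕ) < t ∧ ((M.ord j):ℕ) < k)
          ∪ (Finset.univ.filter fun j : Fin n => (j:ℕ) = t) := by
      intro j hj
      simp only [Finset.mem_filter, Finset.mem_union, Finset.mem_univ, true_and] at hj ⊢
      omega
    have h1' : (Finset.univ.filter fun j : Fin n => (j:ℕ) = t).card ≤ 1 := by
      apply Finset.card_le_one.mpr
      intro a ha b hb
      simp only [Finset.mem_filter] at ha hb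
      exact Fin.ext (by omega)
    calc _ ≤ _ := Finset.card_le_card hsub
      _ ≤ _ + _ := Finset.card_union_le _ _
      _ ≤ _ + 1 := by omega
  have hcn : c n = k := by
    have hfe : (Finset.univ.filter fun j : Fin n => (j:ℕ) < n ∧ ((M.ord j):ℕ) < k)
        = (Finset.univ.filter fun j : Fin n => ((M.ord j):ℕ) < k) := by
      ext j; simp [j.isLt]
    have himg : (Finset.univ.filter fun j : Fin n => ((M.ord j):ℕ) < k).image M.ord
        = Finset.univ.filter (fun i : Fin n => (i:ℕ) < k) := by
      ext i
      simp only [Finset.mem_image, Finset.mem_filter, Finset.mem_univ, true_and]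
      constructor
      · rintro ⟨j, hj, rfl⟩; exact hj
      · intro h; exact ⟨M.ord.symm i, by simp [h]⟩
    have := Finset.card_image_of_injective
      (Finset.univ.filter fun j : Fin n => ((M.ord j):ℕ) < k) M.ord.injective
    rw [himg, card_filter_lt_fin n k h2] at this
    rw [hc]; simp only []
    rw [hfe, ← this]
  obtain ⟨t, ht⟩ := exists_eq_of_step c hc0 hcstep n K (by omega)
  -- the sets R and R'
  set R : Finset (Fin n) :=
    Finset.univ.filter (fun i : Fin n => (i:ℕ) < k ∧ ((M.ord.symm i):ℕ) < t) with hRdef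
  set R' : Finset (Fin n) :=
    Finset.univ.filter (fun i : Fin n => (i:ℕ) < k ∧ t ≤ ((M.ord.symm i):ℕ)) with hR'def
  have hRcard : R.card = K := by
    have himg : (Finset.univ.filter fun j : Fin n => (j:ℕ) < t ∧ ((M.ord j):ℕ) < k).image M.ord
        = R := by
      ext i
      simp only [hRdef, Finset.mem_image, Finset.mem_filter, Finset.mem_univ, true_and]
      constructor
      · rintro ⟨j, ⟨hjt, hjk⟩, rfl⟩; simp only [Equiv.symm_apply_apply]; exact ⟨hjk, hjt⟩
      · rintro ⟨hik, hit⟩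
        exact ⟨M.ord.symm i, ⟨hit, by simp [hik]⟩, by simp⟩
    rw [← himg, Finset.card_image_of_injective _ M.ord.injective]
    exact ht
  have hdisj : Disjoint R R' := by
    rw [Finset.disjoint_left]
    intro a ha hb
    simp only [hRdef, hR'def, Finset.mem_filter, Finset.mem_univ, true_and] at ha hb
    omega
  have hunion : R ∪ R' = Finset.univ.filter (fun i : Fin n => (i:ℕ) < k) := by
    ext i
    simp only [hRdef, hR'def, Finset.mem_union, Finset.mem_filter, Finset.mem_univ, true_and]
    omega
  have hR'card : R'.card = K := by
    have := Finset.card_union_of_disjoint hdisj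
    rw [hunion, card_filter_lt_fin n k h2, hRcard] at this
    omega
  -- enumerations
  set eR := R.orderIsoOfFin hRcard with heR
  set eR' := R'.orderIsoOfFin hR'card with heR'
  have hinjR : Function.Injective (fun y : Fin K => ((eR y : {x // x ∈ R}) : Fin n)) :=
    fun a b hab => eR.injective (Subtype.ext hab)
  have hinjR' : Function.Injective (fun y : Fin K => ((eR' y : {x // x ∈ R'}) : Fin n)) :=
    fun a b hab => eR'.injective (Subtype.ext hab)
  set onesR : ℕ → Finset (Fin n) := fun m =>
    (Finset.univ.filter fun y : Fin K => (y:ℕ) < m).image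
      (fun y => ((eR y : {x // x ∈ R}) : Fin n)) with honesR
  set onesR' : ℕ → Finset (Fin n) := fun m =>
    (Finset.univ.filter fun y : Fin K => (y:ℕ) < m).image
      (fun y => ((eR' y : {x // x ∈ R'}) : Fin n)) with honesR'
  have honesRsub : ∀ m, onesR m ⊆ R := by
    intro m i hi
    simp only [honesR, Finset.mem_image] at hi
    obtain ⟨y, _, rfl⟩ := hi
    exact (eR y).2
  have honesR'sub : ∀ m, onesR' m ⊆ R' := by
    intro m i hi
    simp only [honesR', Finset.mem_image] at hi
    obtain ⟨y, _, rfl⟩ := hi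
    exact (eR' y).2
  have honesRcard : ∀ m, m ≤ K → (onesR m).card = m := by
    intro m hm
    rw [honesR]
    rw [Finset.card_image_of_injective _ hinjR, card_filter_lt_fin K m hm]
  have honesR'card : ∀ m, m ≤ K → (onesR' m).card = m := by
    intro m hm
    rw [honesR']
    rw [Finset.card_image_of_injective _ hinjR', card_filter_lt_fin K m hm]
  -- the inputs
  set S : ℕ → ℕ → Finset (Fin n) := fun a b => onesR a ∪ onesR' b with hS
  have hSsub : ∀ a b, ∀ i ∈ S a b, (i:ℕ) < k := by
    intro a b i hi
    rcases Finset.mem_union.mp hi with h | h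
    · have := honesRsub a h
      simp only [hRdef, Finset.mem_filter] at this; exact this.2.1
    · have := honesR'sub b h
      simp only [hR'def, Finset.mem_filter] at this; exact this.2.1
  have hScard : ∀ a b, a ≤ K → b ≤ K → (S a b).card = a + b := by
    intro a b ha hb
    rw [hS]
    rw [Finset.card_union_of_disjoint
      (Finset.disjoint_of_subset_left (honesRsub a)
        (Finset.disjoint_of_subset_right (honesR'sub b) hdisj)),
      honesRcard a ha, honesR'card b hb]
  set νf : ℕ → ℕ → (Fin n → Bool) := fun a b i => decide (i ∈ S a b) with hνf
  have hones : ∀ a b, a ≤ K → b ≤ K → countOnesFirst k (νf a b) = a + b := by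
    intro a b ha hb
    rw [hνf]
    rw [indicator_countOnesFirst k (S a b) (hSsub a b), hScard a b ha hb]
  -- pigeonhole on prefix states
  set step : (Fin n → Bool) → Fin d → Fin n → Fin d :=
    fun ν v j => M.T j (ν (M.ord j)) v with hstepdef
  set g : Fin (K+1) → Fin d := fun m =>
    ((List.finRange n).take t).foldl (step (νf m (K - m))) M.start with hg
  have hcard : Fintype.card (Fin d) < Fintype.card (Fin (K+1)) := by
    simp only [Fintype.card_fin]; omega
  obtain ⟨m, m', hne, heq⟩ := Fintype.exists_ne_map_eq_of_card_lt g hcard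
  have hmK : (m:ℕ) ≤ K := by omega
  have hm'K : (m':ℕ) ≤ K := by omega
  have hneval : (m:ℕ) ≠ (m':ℕ) := fun h => hne (Fin.ext h)
  -- hybrid input
  set μ : Fin n → Bool := νf m' (K - m) with hμ
  -- agreement before t with νf m' (K - m')
  have hA1 : ∀ j : Fin n, (j:ℕ) < t → μ (M.ord j) = νf m' (K - m') (M.ord j) := by
    intro j hj
    have hnR' : ∀ x, M.ord j ∉ onesR' x := by
      intro x hx
      have := honesR'sub x hx
      simp only [hR'def, Finset.mem_filter, Equiv.symm_apply_apply] at this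
      omega
    simp only [hμ, hνf, hS, decide_eq_decide, Finset.mem_union]
    constructor
    · rintro (h | h)
      · exact Or.inl h
      · exact absurd h (hnR' _)
    · rintro (h | h)
      · exact Or.inl h
      · exact absurd h (hnR' _)
  -- agreement from t on with νf m (K - m)
  have hA2 : ∀ j : Fin n, t ≤ (j:ℕ) → μ (M.ord j) = νf m (K - m) (M.ord j) := by
    intro j hj
    have hnR : ∀ x, M.ord j ∉ onesR x := by
      intro x hx
      have := honesRsub x hx
      simp only [hRdef, Finset.mem_filter, Equiv.symm_apply_apply] at this
      omega
    simp only [hμ, hνf, hS, decide_eq_decide, Finset.mem_union]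
    constructor
    · rintro (h | h)
      · exact absurd h (hnR _)
      · exact Or.inr h
    · rintro (h | h)
      · exact absurd h (hnR _)
      · exact Or.inr h
  -- run split
  have hsplit : ∀ ν : Fin n → Bool, M.run ν
      = ((List.finRange n).drop t).foldl (step ν)
          (((List.finRange n).take t).foldl (step ν) M.start) := by
    intro ν
    have h := List.take_append_drop t (List.finRange n)
    calc M.run ν = ((List.finRange n).take t ++ (List.finRange n).drop t).foldl
          (step ν) M.start := by rw [h]; rfl
      _ = _ := List.foldl_append
  -- prefix equality
  have hpre : ((List.finRange n).take t).foldl (step μ) M.start = g m := by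
    have e1 : ((List.finRange n).take t).foldl (step μ) M.start
        = ((List.finRange n).take t).foldl (step (νf m' (K - m'))) M.start := by
      apply foldl_congr_on
      intro j hj
      apply hA1
      rw [List.mem_take_iff_getElem] at hj
      obtain ⟨i, hi, rfl⟩ := hj
      simp at hi ⊢
      omega
    rw [e1]
    have : ((List.finRange n).take t).foldl (step (νf m' (K - m'))) M.start = g m' := rfl
    rw [this, ← heq]
  have hrun : M.run μ = M.run (νf m (K - m)) := by
    rw [hsplit μ, hsplit (νf m (K - m)), hpre]
    have e2 : ((List.finRange n).drop t).foldl (step μ) (g m)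
        = ((List.finRange n).drop t).foldl (step (νf m (K - m))) (g m) := by
      apply foldl_congr_on
      intro j hj
      apply hA2
      rw [List.mem_drop_iff_getElem] at hj
      obtain ⟨i, hi, rfl⟩ := hj
      simp
    rw [e2]
  -- NotOk values
  have hbal : NotOk n k (νf m (K - m)) = false := by
    have ho : countOnesFirst k (νf m (K - m)) = K := by
      rw [hones m (K - m) hmK (by omega)]; omega
    have hz : countZerosFirst k (νf m (K - m)) = K := by
      have := counts_sum k h2 (νf m (K - m))
      omega
    simp [NotOk, ho, hz]
    exact hKdef
  have hunbal : NotOk n k μ = true := by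
    have ho : countOnesFirst k μ = m' + (K - m) := by
      rw [hμ]; exact hones m' (K - m) hm'K (by omega)
    simp only [NotOk, Bool.not_eq_true', decide_eq_false_iff_not, not_and,
      Bool.not_eq_false]
    intro _
    omega
  -- contradiction
  have hacc1 : ¬ M.accepts (νf m (K - m)) := by
    intro h
    rw [hcomp] at h
    rw [hbal] at h
    exact absurd h (by simp)
  have hacc2 : M.accepts μ := by
    rw [hcomp, hunbal]
  rw [DOBDD.accepts, hrun] at hacc2
  exact hacc1 hacc2
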